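/- Let E be a finite extension of ℚ and L a finite-dimensional Lie algebra over E. For f ∈ Aut_ℚ(L) and σ ∈ Aut(E), the invertible ℚ-linear map σ ⊗ f on E ⊗_ℚ L defined by (σ⊗f)(x ⊗ a) = σ(x) ⊗ f(a) maps the entangled ideal N(I,f,σ) onto N(f(I),1,1), and consequently dim_E K(I,f,σ) = dim_E K(f(I),1,1), where K(I,f,σ) = (E ⊗_ℚ L)/N(I,f,σ). -/

import Mathlib

open scoped TensorProduct

/-- The ℚ-linear map `E ⊗_ℚ L → L` induced by the ℚ-bilinear map `(x, a) ↦ σ(x) • f(a)`. -/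
noncomputable def sigmaFLift (E L : Type) [Field E] [CharZero E] [LieRing L]
    [LieAlgebra E L] [LieAlgebra ℚ L] [IsScalarTower ℚ E L]
    (σ : E ≃ₐ[ℚ] E) (f : L ≃ₗ⁅ℚ⁆ L) : E ⊗[ℚ] L →ₗ[ℚ] L :=
  TensorProduct.lift
    (LinearMap.mk₂ ℚ (fun x a => σ x • f a)
      (fun x y a => by (try dsimp only); rw [map_add, add_smul])
      (fun q x a => by (try dsimp only); rw [show σ (q • x) = q • σ x from map_smul σ.toLinearEquiv q x, smul_assoc])
      (fun x a b => by (try dsimp only); rw [show f (a + b) = f a + f b from map_add f.toLinearEquiv a b, smul_add])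
      (fun q x a => by (try dsimp only); rw [show f (q • a) = q • f a from map_smul f.toLinearEquiv q a, smul_comm]))

/-- `N(I,f,σ)`, as a subset of `E ⊗_ℚ L`. -/
noncomputable def entangledSet (E L : Type) [Field E] [CharZero E] [LieRing L]
    [LieAlgebra E L] [LieAlgebra ℚ L] [IsScalarTower ℚ E L]
    (I : LieIdeal ℚ L) (f : L ≃ₗ⁅ℚ⁆ L) (σ : E ≃ₐ[ℚ] E) : Set (E ⊗[ℚ] L) :=
  {n | n ∈ LinearMap.range
        (TensorProduct.map (LinearMap.id : E →ₗ[ℚ] E) (I : Submodule ℚ L).subtype) ∧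
      sigmaFLift E L σ f n = 0}

theorem sigmaFLift_tmul (E L : Type) [Field E] [CharZero E] [LieRing L]
    [LieAlgebra E L] [LieAlgebra ℚ L] [IsScalarTower ℚ E L]
    (σ : E ≃ₐ[ℚ] E) (f : L ≃ₗ⁅ℚ⁆ L) (x : E) (a : L) :
    sigmaFLift E L σ f (x ⊗ₜ a) = σ x • f a := rfl

/-- For `E` a finite extension of ℚ and `L` a finite-dimensional `E`-Lie algebra, the
invertible ℚ-linear map `σ ⊗ f` on `E ⊗_ℚ L` maps the entangled ideal `N(I,f,σ)` onto
`N(f(I),1,1)`, and consequently `dim_E K(I,f,σ) = dim_E K(f(I),1,1)`, where `K(I,f,σ)` is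
the quotient `(E ⊗_ℚ L) ⧸ N(I,f,σ)`. -/
theorem sigma_tensor_f_maps_entangled_ideal
    (E L : Type) [Field E] [CharZero E] [FiniteDimensional ℚ E]
    [LieRing L] [LieAlgebra E L] [LieAlgebra ℚ L] [IsScalarTower ℚ E L]
    [FiniteDimensional E L]
    (I : LieIdeal ℚ L) (f : L ≃ₗ⁅ℚ⁆ L) (σ : E ≃ₐ[ℚ] E)
    (N₁ N₂ : LieIdeal E (E ⊗[ℚ] L))
    (hN₁ : (N₁ : Set (E ⊗[ℚ] L)) = entangledSet E L I f σ)
    (hN₂ : (N₂ : Set (E ⊗[ℚ] L)) =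
      entangledSet E L (LieIdeal.map f.toLieHom I) (LieEquiv.refl : L ≃ₗ⁅ℚ⁆ L) (AlgEquiv.refl : E ≃ₐ[ℚ] E)) :
    (TensorProduct.congr σ.toLinearEquiv f.toLinearEquiv) '' (N₁ : Set (E ⊗[ℚ] L)) =
        (N₂ : Set (E ⊗[ℚ] L)) ∧
      Module.finrank E ((E ⊗[ℚ] L) ⧸ N₁) = Module.finrank E ((E ⊗[ℚ] L) ⧸ N₂) := by
  classical
  set T := TensorProduct.congr σ.toLinearEquiv f.toLinearEquiv with hTdef
  set p : Submodule ℚ L := (I : Submodule ℚ L) with hp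
  set J : LieIdeal ℚ L := LieIdeal.map f.toLieHom I with hJ
  have hfsurj : Function.Surjective f.toLieHom := f.surjective
  have hq : (J : Submodule ℚ L) = p.map (f.toLieHom : L →ₗ[ℚ] L) :=
    LieIdeal.coe_map_of_surjective hfsurj
  set q : Submodule ℚ L := (J : Submodule ℚ L) with hqdef
  -- the map p → q induced by f
  have hmem : ∀ a : p, f a ∈ q := by
    intro a; rw [hq]; exact Submodule.mem_map_of_mem a.2
  set g : p →ₗ[ℚ] q :=
    LinearMap.codRestrict q ((f.toLieHom : L →ₗ[ℚ] L).comp p.subtype) hmem with hg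
  have hgsurj : Function.Surjective g := by
    rintro ⟨b, hb⟩
    rw [hq] at hb
    obtain ⟨a, ha, rfl⟩ := hb
    exact ⟨⟨a, ha⟩, rfl⟩
  -- key composition facts
  have keyF : ∀ n : E ⊗[ℚ] L,
      sigmaFLift E L (AlgEquiv.refl : E ≃ₐ[ℚ] E) (LieEquiv.refl : L ≃ₗ⁅ℚ⁆ L) (T n)
        = sigmaFLift E L σ f n := by
    intro n
    have : (sigmaFLift E L (AlgEquiv.refl : E ≃ₐ[ℚ] E) (LieEquiv.refl : L ≃ₗ⁅ℚ⁆ L)).comp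
        (T : E ⊗[ℚ] L →ₗ[ℚ] E ⊗[ℚ] L) = sigmaFLift E L σ f := by
      apply TensorProduct.ext'
      intro x a
      simp [hTdef, sigmaFLift_tmul]
    exact LinearMap.congr_fun this n
  have keyR : ∀ w : E ⊗[ℚ] p,
      T (TensorProduct.map (LinearMap.id : E →ₗ[ℚ] E) p.subtype w)
        = TensorProduct.map (LinearMap.id : E →ₗ[ℚ] E) q.subtype
            (TensorProduct.map (σ.toLinearEquiv : E →ₗ[ℚ] E) g w) := by
    intro w
    have : ((T : E ⊗[ℚ] L →ₗ[ℚ] E ⊗[ℚ] L).comp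
          (TensorProduct.map (LinearMap.id : E →ₗ[ℚ] E) p.subtype))
        = (TensorProduct.map (LinearMap.id : E →ₗ[ℚ] E) q.subtype).comp
            (TensorProduct.map (σ.toLinearEquiv : E →ₗ[ℚ] E) g) := by
      apply TensorProduct.ext'
      intro x a
      simp only [hTdef, hg, LinearMap.coe_comp, Function.comp_apply, TensorProduct.map_tmul,
        LinearMap.id_coe, id_eq, Submodule.coe_subtype, TensorProduct.congr_tmul,
        LinearEquiv.coe_coe, AlgEquiv.toLinearEquiv_apply,
        LinearMap.codRestrict_apply]
      rfl
    exact LinearMap.congr_fun this w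
  -- the image statement
  have himg : T '' (N₁ : Set (E ⊗[ℚ] L)) = (N₂ : Set (E ⊗[ℚ] L)) := by
    rw [hN₁, hN₂]
    ext m
    constructor
    · rintro ⟨n, ⟨⟨w, rfl⟩, hker⟩, rfl⟩
      refine ⟨⟨TensorProduct.map (σ.toLinearEquiv : E →ₗ[ℚ] E) g w, (keyR w).symm⟩, ?_⟩
      rw [keyF, hker]
    · rintro ⟨⟨w', rfl⟩, hker⟩
      obtain ⟨w, rfl⟩ := TensorProduct.map_surjective σ.toLinearEquiv.surjective hgsurj w'
      refine ⟨TensorProduct.map (LinearMap.id : E →ₗ[ℚ] E) p.subtype w,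
        ⟨⟨w, rfl⟩, ?_⟩, keyR w⟩
      rw [← keyF, keyR]
      exact hker
  refine ⟨himg, ?_⟩
  -- dimension count over ℚ
  have hmap : Submodule.map (T : E ⊗[ℚ] L →ₗ[ℚ] E ⊗[ℚ] L)
      ((N₁ : Submodule E (E ⊗[ℚ] L)).restrictScalars ℚ)
      = (N₂ : Submodule E (E ⊗[ℚ] L)).restrictScalars ℚ := by
    apply Submodule.ext
    intro m
    have h1 : m ∈ T '' (N₁ : Set (E ⊗[ℚ] L)) ↔ m ∈ (N₂ : Set (E ⊗[ℚ] L)) := by rw [himg]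
    simp only [Set.mem_image, SetLike.mem_coe] at h1
    simp only [Submodule.mem_map, Submodule.restrictScalars_mem, LinearEquiv.coe_coe]
    constructor
    · rintro ⟨n, hn, rfl⟩; exact h1.mp ⟨n, hn, rfl⟩
    · intro hm; obtain ⟨n, hn, rfl⟩ := h1.mpr hm; exact ⟨n, hn, rfl⟩
  have e₁ : ((E ⊗[ℚ] L) ⧸ ((N₁ : Submodule E (E ⊗[ℚ] L)).restrictScalars ℚ)) ≃ₗ[ℚ]
      ((E ⊗[ℚ] L) ⧸ ((N₂ : Submodule E (E ⊗[ℚ] L)).restrictScalars ℚ)) :=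
    Submodule.Quotient.equiv _ _ T hmap
  have e₂ : ((E ⊗[ℚ] L) ⧸ ((N₁ : Submodule E (E ⊗[ℚ] L)).restrictScalars ℚ)) ≃ₗ[ℚ]
      ((E ⊗[ℚ] L) ⧸ (N₁ : Submodule E (E ⊗[ℚ] L))) :=
    Submodule.Quotient.restrictScalarsEquiv ℚ _
  have e₃ : ((E ⊗[ℚ] L) ⧸ ((N₂ : Submodule E (E ⊗[ℚ] L)).restrictScalars ℚ)) ≃ₗ[ℚ]
      ((E ⊗[ℚ] L) ⧸ (N₂ : Submodule E (E ⊗[ℚ] L))) :=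
    Submodule.Quotient.restrictScalarsEquiv ℚ _
  have hrank : Module.finrank ℚ ((E ⊗[ℚ] L) ⧸ (N₁ : Submodule E (E ⊗[ℚ] L)))
      = Module.finrank ℚ ((E ⊗[ℚ] L) ⧸ (N₂ : Submodule E (E ⊗[ℚ] L))) :=
    (e₂.symm.trans (e₁.trans e₃)).finrank_eq
  have key : ∀ N : LieIdeal E (E ⊗[ℚ] L),
      Module.finrank ℚ E * Module.finrank E ((E ⊗[ℚ] L) ⧸ N)
        = Module.finrank ℚ ((E ⊗[ℚ] L) ⧸ (N : Submodule E (E ⊗[ℚ] L))) := by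
    intro N
    exact Module.finrank_mul_finrank ℚ E ((E ⊗[ℚ] L) ⧸ (N : Submodule E (E ⊗[ℚ] L)))
  have hpos : 0 < Module.finrank ℚ E := Module.finrank_pos
  exact Nat.eq_of_mul_eq_mul_left hpos (by rw [key N₁, key N₂, hrank])
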